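/- Let p be a pmf on {L,...,R} with L > -∞ satisfying (C1)-(C3), and let X be a random variable on {L,...,R} with E|(Δ⁺p(X)/p(X))·X| < ∞. Then X has pmf p if and only if its CDF F satisfies F(k) = E[-(Δ⁺p(X)/p(X))·(min{X,k} - L + 1)] for all integers k ≥ L. -/

import Mathlib

lemma tail_hasSum (p : ℤ → ℝ) (hp : Summable p) (m : ℤ) :
    HasSum (fun j => if m ≤ j then p j - p (j+1) else 0) (p m) := by
  have h1 : Summable (fun j : ℤ => if m ≤ j then p j else 0) := by
    refine (hp.indicator {j : ℤ | m ≤ j}).congr fun j => ?_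
    simp [Set.indicator_apply]
  have h1' : Summable (fun j : ℤ => if m + 1 ≤ j then p j else 0) := by
    refine (hp.indicator {j : ℤ | m + 1 ≤ j}).congr fun j => ?_
    simp [Set.indicator_apply]
  have h2 : Summable (fun j : ℤ => if m ≤ j then p (j+1) else 0) := by
    have := ((Equiv.addRight (1:ℤ)).summable_iff
      (f := fun j : ℤ => if m + 1 ≤ j then p j else 0)).2 h1'
    refine this.congr fun j => ?_
    simp only [Equiv.coe_addRight, Function.comp]
    by_cases h : m ≤ j
    · rw [if_pos h]; exact if_pos (by omega)
    · rw [if_neg h]; exact if_neg (by omega)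
  have hS : Summable (fun j : ℤ => if m ≤ j then p j - p (j+1) else 0) := by
    refine (h1.sub h2).congr fun j => ?_
    by_cases h : m ≤ j <;> simp [h]
  rw [hS.hasSum_iff]
  have step : (fun j : ℤ => if m ≤ j then p j - p (j+1) else 0)
      = fun j => (if m ≤ j then p j else 0) - (if m ≤ j then p (j+1) else 0) := by
    funext j; by_cases h : m ≤ j <;> simp [h]
  rw [step, Summable.tsum_sub h1 h2]
  have t2 : ∑' j : ℤ, (if m ≤ j then p (j+1) else 0)
      = ∑' j : ℤ, (if m + 1 ≤ j then p j else 0) := by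
    rw [← (Equiv.addRight (1:ℤ)).tsum_eq (fun j : ℤ => if m + 1 ≤ j then p j else 0)]
    refine tsum_congr fun j => ?_
    simp only [Equiv.coe_addRight]
    by_cases h : m ≤ j
    · rw [if_pos h]; exact (if_pos (by omega)).symm
    · rw [if_neg h]; exact (if_neg (by omega)).symm
  have t1 : ∑' j : ℤ, (if m ≤ j then p j else 0)
      = p m + ∑' j : ℤ, (if m + 1 ≤ j then p j else 0) := by
    have hdec : (fun j : ℤ => if m ≤ j then p j else 0)
        = fun j => (if j = m then p m else 0) + (if m + 1 ≤ j then p j else 0) := by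
      funext j
      rcases lt_trichotomy j m with h | h | h
      · rw [if_neg (by omega), if_neg (by omega), if_neg (by omega)]; ring
      · subst h; rw [if_pos le_rfl, if_pos rfl, if_neg (by omega)]; ring
      · rw [if_pos (by omega), if_neg (by omega), if_pos (by omega)]; ring
    rw [hdec, Summable.tsum_add ((hasSum_ite_eq m (p m)).summable) h1', tsum_ite_eq]
  rw [t1, t2]; ring

lemma count_lemma (L k j : ℤ) (hk : L ≤ k) (hj : L ≤ j) :
    ∑ m ∈ Finset.Icc L k, (if m ≤ j then (1:ℝ) else 0) = ((min j k - L + 1 : ℤ) : ℝ) := by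
  classical
  rw [Finset.sum_boole]
  have hfil : (Finset.Icc L k).filter (fun m => m ≤ j) = Finset.Icc L (min j k) := by
    ext m; simp only [Finset.mem_filter, Finset.mem_Icc, le_min_iff]; omega
  rw [hfil, Int.card_Icc]
  have h : ((min j k + 1 - L).toNat : ℤ) = min j k - L + 1 := by
    rw [Int.toNat_of_nonneg (by omega)]; ring
  exact_mod_cast congrArg (Int.cast : ℤ → ℝ) h

theorem stmt_3 (p ρ : ℤ → ℝ) (L : ℤ) (R : WithTop ℤ)
    (hsupp : ∀ k : ℤ, 0 < p k ↔ (L ≤ k ∧ (k : WithTop ℤ) ≤ R))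
    (hnonneg : ∀ k, 0 ≤ p k)
    (hsum : ∑' k : ℤ, p k = 1)
    (hC2 : ∃ M : ℝ, ∀ k : ℤ, L ≤ k → ((k + 1 : ℤ) : WithTop ℤ) ≤ R →
      |(p (k + 1) - p k) * min (∑' ℓ : ℤ, if ℓ ≤ k then p ℓ else 0)
        (1 - ∑' ℓ : ℤ, if ℓ ≤ k then p ℓ else 0) / (p k * p (k + 1))| ≤ M)
    (hC3 : Summable (fun k : ℤ => |(k : ℝ)| * p k))
    (hρnonneg : ∀ k, 0 ≤ ρ k)
    (hρsum : ∑' k : ℤ, ρ k = 1)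
    (hρsupp : ∀ k : ℤ, ρ k ≠ 0 → (L ≤ k ∧ (k : WithTop ℤ) ≤ R))
    (hint : Summable (fun k : ℤ => |(p (k + 1) - p k) / p k * (k : ℝ)| * ρ k)) :
    ρ = p ↔ ∀ k : ℤ, L ≤ k →
      (∑' j : ℤ, if j ≤ k then ρ j else 0)
        = ∑' j : ℤ, (-((p (j + 1) - p j) / p j) * ((min j k - L + 1 : ℤ) : ℝ)) * ρ j := by
  have hpsum : Summable p := by
    by_contra h; rw [tsum_eq_zero_of_not_summable h] at hsum; norm_num at hsum
  have hp0 : ∀ k : ℤ, ¬(L ≤ k ∧ (k : WithTop ℤ) ≤ R) → p k = 0 := by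
    intro k h
    by_contra hne
    exact h ((hsupp k).1 (lt_of_le_of_ne (hnonneg k) (Ne.symm hne)))
  constructor
  · intro h
    rw [h]
    intro k hk
    have key : ∀ j : ℤ, (-((p (j + 1) - p j) / p j) * ((min j k - L + 1 : ℤ) : ℝ)) * p j
        = ∑ m ∈ Finset.Icc L k, (if m ≤ j then p j - p (j + 1) else 0) := by
      intro j
      by_cases hj : L ≤ j
      · by_cases hjR : (j : WithTop ℤ) ≤ R
        · have hpj : p j ≠ 0 := ne_of_gt ((hsupp j).2 ⟨hj, hjR⟩)
          have hsum2 : ∑ m ∈ Finset.Icc L k, (if m ≤ j then p j - p (j + 1) else 0)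
              = ∑ m ∈ Finset.Icc L k, (if m ≤ j then (1:ℝ) else 0) * (p j - p (j + 1)) := by
            refine Finset.sum_congr rfl fun m _ => ?_
            by_cases h : m ≤ j <;> simp [h]
          rw [hsum2, ← Finset.sum_mul, count_lemma L k j hk hj]
          field_simp
          ring
        · have h1 : p j = 0 := hp0 j (fun h => hjR h.2)
          have h2 : p (j + 1) = 0 := by
            refine hp0 (j+1) fun h => hjR ?_
            exact le_trans (WithTop.coe_le_coe.2 (by omega : j ≤ j + 1)) h.2
          simp [h1, h2]
      · have h1 : p j = 0 := hp0 j (fun h => hj h.1)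
        rw [h1, mul_zero, Finset.sum_eq_zero]
        intro m hm
        rw [Finset.mem_Icc] at hm
        rw [if_neg (by omega)]
    rw [tsum_congr key,
      Summable.tsum_finsetSum (fun m _ => (tail_hasSum p hpsum m).summable),
      Finset.sum_congr rfl (fun m _ => (tail_hasSum p hpsum m).tsum_eq),
      tsum_eq_sum (s := Finset.Icc L k) ?_]
    · exact Finset.sum_congr rfl fun m hm => if_pos (Finset.mem_Icc.1 hm).2
    · intro j hj
      rw [Finset.mem_Icc] at hj
      by_cases h : j ≤ k
      · rw [if_pos h]; exact hp0 j fun hh => hj ⟨hh.1, h⟩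
      · exact if_neg h
  · intro H
    have hρs : Summable ρ := by
      by_contra h; rw [tsum_eq_zero_of_not_summable h] at hρsum; norm_num at hρsum
    have hρ0 : ∀ k : ℤ, ¬(L ≤ k ∧ (k : WithTop ℤ) ≤ R) → ρ k = 0 := by
      intro k h; by_contra hne; exact h (hρsupp k hne)
    -- summability of |Δp/p| * ρ
    have habs : Summable (fun j : ℤ => |(p (j + 1) - p j) / p j| * ρ j) := by
      refine Summable.of_nonneg_of_le (fun j => mul_nonneg (abs_nonneg _) (hρnonneg j))
        (fun j => ?_)
        (hint.add ((hasSum_ite_eq (0:ℤ) (|(p (0+1) - p 0) / p 0| * ρ 0)).summable))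
      by_cases h : j = 0
      · subst h; simp
      · rw [if_neg h, add_zero, abs_mul]
        have h1 : (1:ℝ) ≤ |(j:ℝ)| := by
          rw [← Int.cast_abs]; exact_mod_cast Int.one_le_abs h
        have := mul_le_mul_of_nonneg_right
          (le_mul_of_one_le_right (abs_nonneg ((p (j+1) - p j) / p j)) h1) (hρnonneg j)
        linarith
    have hA : Summable (fun j : ℤ => -((p (j + 1) - p j) / p j) * ρ j) := by
      rw [← summable_abs_iff]
      refine habs.congr fun j => ?_
      rw [abs_mul, abs_neg, abs_of_nonneg (hρnonneg j)]
    have hgk : ∀ k : ℤ, L ≤ k →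
        Summable (fun j : ℤ =>
          (-((p (j + 1) - p j) / p j) * ((min j k - L + 1 : ℤ) : ℝ)) * ρ j) := by
      intro k hk
      rw [← summable_abs_iff]
      refine Summable.of_nonneg_of_le (fun j => abs_nonneg _) (fun j => ?_)
        (habs.mul_left ((k - L + 1 : ℤ) : ℝ))
      by_cases hρj : ρ j = 0
      · simp [hρj]
      · have hj : L ≤ j := (hρsupp j hρj).1
        have hc0 : (0:ℝ) ≤ ((min j k - L + 1 : ℤ) : ℝ) := by
          have : (0:ℤ) ≤ min j k - L + 1 := by omega
          exact_mod_cast this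
        have hc : ((min j k - L + 1 : ℤ) : ℝ) ≤ ((k - L + 1 : ℤ) : ℝ) := by
          have : min j k - L + 1 ≤ k - L + 1 := by omega
          exact_mod_cast this
        calc |(-((p (j + 1) - p j) / p j) * ((min j k - L + 1 : ℤ) : ℝ)) * ρ j|
            = ((min j k - L + 1 : ℤ) : ℝ) * (|(p (j + 1) - p j) / p j| * ρ j) := by
              rw [abs_mul, abs_mul, abs_neg, abs_of_nonneg (hρnonneg j), abs_of_nonneg hc0]
              ring
          _ ≤ ((k - L + 1 : ℤ) : ℝ) * (|(p (j + 1) - p j) / p j| * ρ j) :=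
              mul_le_mul_of_nonneg_right hc (mul_nonneg (abs_nonneg _) (hρnonneg j))
    have hAind : ∀ k : ℤ, Summable
        (fun j : ℤ => if k ≤ j then -((p (j + 1) - p j) / p j) * ρ j else 0) := by
      intro k
      refine (hA.indicator {j : ℤ | k ≤ j}).congr fun j => ?_
      simp [Set.indicator_apply]
    have hρind : ∀ k : ℤ, Summable (fun j : ℤ => if j ≤ k then ρ j else 0) := by
      intro k
      refine (hρs.indicator {j : ℤ | j ≤ k}).congr fun j => ?_
      simp [Set.indicator_apply]
    -- pointwise identity ρ k = tail sum
    have hT : ∀ k : ℤ, L ≤ k →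
        ρ k = ∑' j : ℤ, (if k ≤ j then -((p (j + 1) - p j) / p j) * ρ j else 0) := by
      intro k hk
      by_cases hLk : k = L
      · subst hLk
        have hHL := H k le_rfl
        have hFL : ∑' j : ℤ, (if j ≤ k then ρ j else 0) = ρ k := by
          rw [tsum_eq_single k (fun j hj => ?_)]
          · rw [if_pos le_rfl]
          · by_cases hle : j ≤ k
            · rw [if_pos hle]
              refine hρ0 j fun hc => ?_
              have := hc.1
              exact hj (by omega)
            · exact if_neg hle
        rw [← hFL, hHL]
        refine tsum_congr fun j => ?_
        by_cases hj : k ≤ j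
        · rw [if_pos hj, min_eq_right hj]
          have hcast : ((min j k - k + 1 : ℤ) : ℝ) = 1 := by
            rw [min_eq_right hj]; norm_num
          rw [show ((k - k + 1 : ℤ) : ℝ) = 1 from by norm_num, mul_one]
        · rw [if_neg hj]
          have hz : ρ j = 0 := by
            refine hρ0 j fun hc => ?_
            have := hc.1
            omega
          rw [hz, mul_zero]
      · have h : L < k := by omega
        have h1 := H k hk
        have h2 := H (k - 1) (by omega)
        have hF : (∑' j : ℤ, (if j ≤ k then ρ j else 0))
            - (∑' j : ℤ, (if j ≤ k - 1 then ρ j else 0)) = ρ k := by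
          rw [← Summable.tsum_sub (hρind k) (hρind (k-1))]
          rw [tsum_eq_single k (fun j hj => ?_)]
          · rw [if_pos le_rfl, if_neg (by omega), sub_zero]
          · by_cases hle : j ≤ k - 1
            · rw [if_pos (by omega), if_pos hle, sub_self]
            · rw [if_neg (by omega), if_neg hle, sub_self]
        have hG : (∑' j : ℤ, (-((p (j + 1) - p j) / p j) * ((min j k - L + 1 : ℤ) : ℝ)) * ρ j)
            - (∑' j : ℤ, (-((p (j + 1) - p j) / p j) * ((min j (k-1) - L + 1 : ℤ) : ℝ)) * ρ j)
            = ∑' j : ℤ, (if k ≤ j then -((p (j + 1) - p j) / p j) * ρ j else 0) := by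
          rw [← Summable.tsum_sub (hgk k hk) (hgk (k-1) (by omega))]
          refine tsum_congr fun j => ?_
          by_cases hj : k ≤ j
          · rw [if_pos hj, min_eq_right hj, min_eq_right (by omega : k - 1 ≤ j)]
            push_cast
            ring
          · rw [if_neg hj, min_eq_left (by omega), min_eq_left (by omega)]
            ring
        rw [← hF, h1, h2, hG]
    -- recurrence
    have hrec : ∀ k : ℤ, L ≤ k →
        ρ k - ρ (k + 1) = -((p (k + 1) - p k) / p k) * ρ k := by
      intro k hk
      have e1 := hT k hk
      have e2 := hT (k+1) (by omega)
      conv_lhs => rw [e1, e2]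
      rw [← Summable.tsum_sub (hAind k) (hAind (k+1))]
      rw [tsum_eq_single k (fun j hj => ?_)]
      · rw [if_pos le_rfl, if_neg (by omega), sub_zero]
      · by_cases hle : k + 1 ≤ j
        · rw [if_pos (by omega), if_pos hle, sub_self]
        · rw [if_neg (by omega), if_neg hle, sub_self]
    -- p L > 0
    have hpL : 0 < p L := by
      obtain ⟨k0, hk0⟩ : ∃ k : ℤ, p k ≠ 0 := by
        by_contra h
        push_neg at h
        simp only [h, tsum_zero] at hsum
        norm_num at hsum
      obtain ⟨ha, hb⟩ := (hsupp k0).1 (lt_of_le_of_ne (hnonneg k0) (Ne.symm hk0))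
      exact (hsupp L).2 ⟨le_rfl, le_trans (WithTop.coe_le_coe.2 ha) hb⟩
    -- proportionality
    have hprop : ∀ k : ℤ, L ≤ k → ρ k * p L = p k * ρ L := by
      refine fun k => Int.le_induction (m := L) (motive := fun k _ => ρ k * p L = p k * ρ L) (by ring) ?_ k
      intro k hk2 ih
      ·
        by_cases hpk1 : p (k + 1) = 0
        · have hz : ρ (k + 1) = 0 := by
            refine hρ0 (k + 1) fun hc => (ne_of_gt ((hsupp _).2 hc)) hpk1
          rw [hz, hpk1]; ring
        · have hk1R : ((k + 1 : ℤ) : WithTop ℤ) ≤ R :=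
            ((hsupp (k + 1)).1 (lt_of_le_of_ne (hnonneg _) (Ne.symm hpk1))).2
          have hkR : ((k : ℤ) : WithTop ℤ) ≤ R :=
            le_trans (WithTop.coe_le_coe.2 (by omega : k ≤ k + 1)) hk1R
          have hpk : p k ≠ 0 := ne_of_gt ((hsupp k).2 ⟨hk2, hkR⟩)
          have h := hrec k hk2
          have h2 : ρ (k + 1) * p k = ρ k * p (k + 1) := by
            field_simp at h
            linear_combination -h
          have h3 : ρ (k + 1) * p L * p k = p (k + 1) * ρ L * p k := by
            linear_combination p L * h2 + p (k + 1) * ih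
          exact mul_right_cancel₀ hpk h3
    -- conclude
    have hρeq : ∀ k : ℤ, ρ k = (ρ L / p L) * p k := by
      intro k
      by_cases hk : L ≤ k
      · have h := hprop k hk
        field_simp
        linear_combination h
      · have h1 : p k = 0 := hp0 k fun hc => hk hc.1
        have h2 : ρ k = 0 := hρ0 k fun hc => hk hc.1
        rw [h1, h2, mul_zero]
    have hone : ρ L / p L = 1 := by
      have h1 : ∑' k : ℤ, ((ρ L / p L) * p k) = 1 := by
        rw [← tsum_congr hρeq]; exact hρsum
      rwa [tsum_mul_left, hsum, mul_one] at h1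
    funext k
    rw [hρeq k, hone, one_mul]
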